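/- For any prime p and any degree d ≥ 1, there exists a form of degree d over Q_p in exactly d^2 variables having only the trivial zero. -/

import Mathlib

open MvPolynomial


-- surjectivity of toZMod
lemma AF.toZMod_surj (p : ℕ) [Fact p.Prime] : Function.Surjective (PadicInt.toZMod (p := p)) := by
  intro a
  refine ⟨((a.val : ℕ) : ℤ_[p]), ?_⟩
  rw [map_natCast]
  simp [ZMod.natCast_val, ZMod.cast_id]

-- good matrices over ZMod p
lemma AF.exists_good_matrices (p : ℕ) [Fact p.Prime] (d : ℕ) (hd : 1 ≤ d) :
    ∃ A : Fin d → Matrix (Fin d) (Fin d) (ZMod p),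
      ∀ y : Fin d → ZMod p, y ≠ 0 → (∑ k, y k • A k).det ≠ 0 := by
  haveI := Fact.mk (Nat.Prime.one_lt (Fact.out (p := p.Prime)))
  let K := GaloisField p d
  have hfr : Module.finrank (ZMod p) K = d := GaloisField.finrank p (by omega)
  let b : Module.Basis (Fin d) (ZMod p) K :=
    (Module.finBasis (ZMod p) K).reindex (finCongr hfr)
  refine ⟨fun k => Algebra.leftMulMatrix b (b k), fun y hy => ?_⟩
  have key : (∑ k, y k • (Algebra.leftMulMatrix b) (b k))
      = (Algebra.leftMulMatrix b) (∑ k, y k • b k) := by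
    rw [map_sum]
    exact Finset.sum_congr rfl fun k _ => (map_smul _ _ _).symm
  rw [key]
  have hs : (∑ k, y k • b k) ≠ 0 := by
    intro h
    apply hy
    have := b.equivFun.symm.injective (a₁ := y) (a₂ := 0)
    simp only [Module.Basis.equivFun_symm_apply, h, map_zero] at this
    exact this (by simp [h])
  have hu : IsUnit ((Algebra.leftMulMatrix b) (∑ k, y k • b k)) := by
    have : IsUnit (∑ k, y k • b k) := isUnit_iff_ne_zero.mpr hs
    exact this.map (Algebra.leftMulMatrix b)
  have := (Matrix.isUnit_iff_isUnit_det _).mp hu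
  exact this.ne_zero


lemma AF.eval_mul_of_isHomogeneous {R : Type*} [CommRing R] {σ : Type*} {φ : MvPolynomial σ R}
    {n : ℕ} (h : φ.IsHomogeneous n) (c : R) (x : σ → R) :
    eval (fun i => c * x i) φ = c ^ n * eval x φ := by
  classical
  rw [eval_eq, eval_eq, Finset.mul_sum]
  apply Finset.sum_congr rfl
  intro m hm
  have hdeg : (∑ i ∈ m.support, m i) = n := by
    have := h (mem_support_iff.mp hm)
    simpa [Finsupp.weight, Finsupp.linearCombination, Finsupp.sum] using this
  have : (∏ i ∈ m.support, (c * x i) ^ m i)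
      = c ^ n * ∏ i ∈ m.support, x i ^ m i := by
    rw [← hdeg, ← Finset.prod_pow_eq_pow_sum]
    rw [← Finset.prod_mul_distrib]
    exact Finset.prod_congr rfl fun i _ => mul_pow _ _ _
  rw [this]; ring

lemma AF.eval_zero_of_isHomogeneous {R : Type*} [CommRing R] {σ : Type*} {φ : MvPolynomial σ R}
    {n : ℕ} (h : φ.IsHomogeneous n) (hn : 1 ≤ n) :
    eval (0 : σ → R) φ = 0 := by
  have := AF.eval_mul_of_isHomogeneous h 0 0
  simpa [zero_pow (by omega : n ≠ 0)] using this

lemma AF.exists_norm_form (p : ℕ) [Fact p.Prime] (d : ℕ) (hd : 1 ≤ d) :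
    ∃ N : MvPolynomial (Fin d) ℚ_[p], N.IsHomogeneous d ∧
      ∀ x : Fin d → ℚ_[p], x ≠ 0 →
        ∃ v : ℤ, ‖eval x N‖ = (p : ℝ) ^ ((d : ℤ) * v) := by
  classical
  obtain ⟨A, hA⟩ : ∃ A : Fin d → Matrix (Fin d) (Fin d) (ZMod p),
      ∀ y : Fin d → ZMod p, y ≠ 0 → (∑ k, y k • A k).det ≠ 0 :=
    AF.exists_good_matrices p d hd
  have hsurj : Function.Surjective (PadicInt.toZMod (p := p)) := AF.toZMod_surj p
  set B : Fin d → Matrix (Fin d) (Fin d) ℤ_[p] :=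
    fun k => (A k).map (Function.surjInv hsurj) with hBdef
  have hB : ∀ k, (B k).map PadicInt.toZMod = A k := by
    intro k
    ext i j
    simp [hBdef, Matrix.map_apply, Function.surjInv_eq hsurj]
  set Ment : Matrix (Fin d) (Fin d) (MvPolynomial (Fin d) ℚ_[p]) :=
    Matrix.of (fun i j => ∑ k, X k * C ((B k i j : ℚ_[p]))) with hMent
  have hhom : (Ment.det).IsHomogeneous d := by
    rw [Matrix.det_apply']
    apply IsHomogeneous.sum
    intro σ _
    have h1 : (∏ i, Ment (σ i) i).IsHomogeneous d := by
      have := IsHomogeneous.prod Finset.univ (fun i => Ment (σ i) i) (fun _ => 1)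
        (fun i _ => by
          simp only [hMent, Matrix.of_apply]
          apply IsHomogeneous.sum
          intro k _
          simpa using (isHomogeneous_X _ k).mul (isHomogeneous_C _ ((B k (σ i) i : ℚ_[p]))))
      simpa using this
    have h0 : (((Equiv.Perm.sign σ : ℤ) : MvPolynomial (Fin d) ℚ_[p])).IsHomogeneous 0 := by
      rw [← map_intCast (C : ℚ_[p] →+* MvPolynomial (Fin d) ℚ_[p])]
      exact isHomogeneous_C _ _
    simpa using h0.mul h1
  refine ⟨Ment.det, hhom, ?_⟩
  intro x hx
  obtain ⟨i0, -, hmax⟩ := Finset.exists_max_image Finset.univ (fun i => ‖x i‖)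
    ⟨⟨0, hd⟩, Finset.mem_univ _⟩
  obtain ⟨jx, hjx⟩ := Function.ne_iff.mp hx
  have hxi0 : x i0 ≠ 0 := by
    intro h0
    have := hmax jx (Finset.mem_univ _)
    rw [h0] at this
    simp only [norm_zero] at this
    exact hjx (by simpa using norm_le_zero_iff.mp this)
  set c : ℚ_[p] := x i0 with hc
  set y : Fin d → ℚ_[p] := fun i => c⁻¹ * x i with hy
  have hy1 : ∀ i, ‖y i‖ ≤ 1 := by
    intro i
    rw [hy]
    simp only [norm_mul, norm_inv]
    rw [inv_mul_le_one₀ (norm_pos_iff.mpr hxi0)]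
    exact hmax i (Finset.mem_univ _)
  set y' : Fin d → ℤ_[p] := fun i => ⟨y i, hy1 i⟩ with hy'
  set M' : Matrix (Fin d) (Fin d) ℤ_[p] :=
    Matrix.of (fun i j => ∑ k, y' k * B k i j) with hM'
  have hevaly : eval y Ment.det = ((M'.det : ℤ_[p]) : ℚ_[p]) := by
    rw [show ((M'.det : ℤ_[p]) : ℚ_[p]) = PadicInt.Coe.ringHom M'.det from rfl]
    rw [RingHom.map_det (eval y) Ment, RingHom.map_det (PadicInt.Coe.ringHom) M']
    congr 1
    ext i j
    simp only [hMent, hM', RingHom.mapMatrix_apply, Matrix.map_apply, Matrix.of_apply,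
      map_sum, map_mul, eval_X, eval_C]
    rfl
  have hunit : ‖M'.det‖ = 1 := by
    have hred : PadicInt.toZMod M'.det
        = (∑ k, (PadicInt.toZMod (y' k)) • A k).det := by
      rw [RingHom.map_det]
      congr 1
      ext i j
      simp [hM', RingHom.mapMatrix_apply, Matrix.map_apply, ← hB,
        Matrix.sum_apply, Matrix.smul_apply, smul_eq_mul]
    have hy'i0 : y' i0 = 1 := by
      apply Subtype.ext
      simp [hy', hy, hc, inv_mul_cancel₀ hxi0]
      exact inv_mul_cancel₀ hxi0
    have hybar : (fun k => PadicInt.toZMod (y' k)) ≠ 0 := by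
      intro h
      have := congrFun h i0
      rw [hy'i0] at this
      simp at this
    have hne : PadicInt.toZMod M'.det ≠ 0 := by
      rw [hred]; exact hA _ hybar
    have hker : M'.det ∉ RingHom.ker (PadicInt.toZMod (p := p)) := by
      simpa [RingHom.mem_ker] using hne
    rw [PadicInt.ker_toZMod] at hker
    have : IsUnit M'.det := by
      by_contra h
      exact hker ((IsLocalRing.mem_maximalIdeal _).mpr h)
    exact PadicInt.isUnit_iff.mp this
  have hscale : eval y Ment.det = (c⁻¹) ^ d * eval x Ment.det :=
    AF.eval_mul_of_isHomogeneous hhom c⁻¹ x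
  have hxeval : eval x Ment.det = c ^ d * eval y Ment.det := by
    rw [hscale]
    field_simp
    rw [one_div, inv_pow, mul_assoc, mul_inv_cancel₀ (pow_ne_zero _ hxi0), mul_one]
  refine ⟨-c.valuation, ?_⟩
  rw [hxeval, norm_mul, hevaly, ← PadicInt.norm_def, hunit, mul_one, norm_pow,
    Padic.norm_eq_zpow_neg_valuation hxi0, ← zpow_natCast, ← zpow_mul]
  ring_nf

lemma AF.norm_sum_lt (p : ℕ) [Fact p.Prime] {ι : Type*} (s : Finset ι) (f : ι → ℚ_[p])
    {B : ℝ} (hB : 0 < B) (h : ∀ j ∈ s, ‖f j‖ < B) : ‖∑ j ∈ s, f j‖ < B := by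
  classical
  induction s using Finset.induction_on with
  | empty => simpa using hB
  | insert _ _ hnot ih =>
    rename_i a t
    rw [Finset.sum_insert hnot]
    calc ‖f a + ∑ j ∈ t, f j‖ ≤ max ‖f a‖ ‖∑ j ∈ t, f j‖ := Padic.nonarchimedean _ _
    _ < B := max_lt (h a (Finset.mem_insert_self _ _))
        (ih fun j hj => h j (Finset.mem_insert_of_mem hj))


theorem exists_anisotropic_form_in_d_sq_vars
    (p : ℕ) [Fact p.Prime] (d : ℕ) (hd : 1 ≤ d) :
    ∃ F : MvPolynomial (Fin (d ^ 2)) ℚ_[p], F.IsHomogeneous d ∧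
      ∀ x : Fin (d ^ 2) → ℚ_[p], MvPolynomial.eval x F = 0 → x = 0 := by
  classical
  obtain ⟨N, hN, hval⟩ := AF.exists_norm_form p d hd
  have hp1 : (1 : ℝ) < p := by
    exact_mod_cast (Fact.out (p := p.Prime)).one_lt
  have hp0 : (0 : ℝ) < p := lt_trans one_pos hp1
  let e : Fin d × Fin d ≃ Fin (d ^ 2) :=
    finProdFinEquiv.trans (finCongr (pow_two d).symm)
  let F : MvPolynomial (Fin (d ^ 2)) ℚ_[p] :=
    ∑ j : Fin d, C ((p : ℚ_[p]) ^ (j : ℕ)) * rename (fun i => e (j, i)) N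
  have hF : F.IsHomogeneous d := by
    apply IsHomogeneous.sum
    intro j _
    exact (hN.rename_isHomogeneous).C_mul _
  refine ⟨F, hF, ?_⟩
  intro x hx
  by_contra hx0
  -- blocks
  set xb : Fin d → (Fin d → ℚ_[p]) := fun j i => x (e (j, i)) with hxb
  set t : Fin d → ℚ_[p] := fun j => (p : ℚ_[p]) ^ (j : ℕ) * eval (xb j) N with ht
  have hevalF : eval x F = ∑ j, t j := by
    simp only [F, map_sum, eval_mul, eval_C, eval_rename, ht]
    rfl
  -- norms of nonzero blocks
  have hnorm : ∀ j, xb j ≠ 0 → ∃ v : ℤ, ‖t j‖ = (p : ℝ) ^ (-(j : ℤ) + (d : ℤ) * v) := by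
    intro j hj
    obtain ⟨v, hv⟩ := hval (xb j) hj
    refine ⟨v, ?_⟩
    rw [ht]
    simp only [norm_mul, Padic.norm_p_pow, hv]
    rw [← zpow_add₀ (ne_of_gt hp0)]
  have htzero : ∀ j, xb j = 0 → t j = 0 := by
    intro j hj
    simp only [ht, hj]
    rw [AF.eval_zero_of_isHomogeneous hN hd, mul_zero]
  have htne : ∀ j, t j ≠ 0 → xb j ≠ 0 := fun j h hj => h (htzero j hj)
  have htne' : ∀ j, xb j ≠ 0 → t j ≠ 0 := by
    intro j hj
    obtain ⟨v, hv⟩ := hnorm j hj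
    intro h0
    rw [h0, norm_zero] at hv
    exact (zpow_pos hp0 _).ne' hv.symm
  -- some block nonzero
  obtain ⟨a, ha⟩ := Function.ne_iff.mp hx0
  obtain ⟨⟨j1, i1⟩, rfl⟩ := e.surjective a
  have hblk : xb j1 ≠ 0 := fun h => ha (by simpa using congrFun h i1)
  -- pick max-norm nonzero term
  set T : Finset (Fin d) := Finset.univ.filter (fun j => t j ≠ 0) with hT
  have hTne : T.Nonempty := ⟨j1, by simp [hT, htne' j1 hblk]⟩
  obtain ⟨j0, hj0T, hj0max⟩ := Finset.exists_max_image T (fun j => ‖t j‖) hTne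
  have hj0 : t j0 ≠ 0 := (Finset.mem_filter.mp hj0T).2
  -- distinct norms
  have hdist : ∀ j, t j ≠ 0 → j ≠ j0 → ‖t j‖ ≠ ‖t j0‖ := by
    intro j hj hne heq
    obtain ⟨v, hv⟩ := hnorm j (htne j hj)
    obtain ⟨v0, hv0⟩ := hnorm j0 (htne j0 hj0)
    rw [hv, hv0] at heq
    have := zpow_right_injective₀ hp0 (ne_of_gt hp1) heq
    have hjd : (j : ℤ) < d := by exact_mod_cast j.isLt
    have hj0d : (j0 : ℤ) < d := by exact_mod_cast j0.isLt
    have hjne : (j : ℤ) ≠ (j0 : ℤ) := by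
      intro h
      exact hne (Fin.ext (by exact_mod_cast h))
    have hdvd : (d : ℤ) ∣ ((j0 : ℤ) - (j : ℤ)) :=
      ⟨v0 - v, by rw [mul_sub]; linarith⟩
    have := Int.eq_zero_of_abs_lt_dvd hdvd (by
      rw [abs_sub_lt_iff]
      constructor <;> omega)
    omega
  have hrest : ‖∑ j ∈ Finset.univ.erase j0, t j‖ < ‖t j0‖ := by
    apply AF.norm_sum_lt p _ _ (norm_pos_iff.mpr hj0)
    intro j hj
    rcases eq_or_ne (t j) 0 with h | h
    · rw [h, norm_zero]; exact norm_pos_iff.mpr hj0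
    · have hjT : j ∈ T := by simp [hT, h]
      exact lt_of_le_of_ne (hj0max j hjT) (hdist j h (Finset.ne_of_mem_erase hj))
  have hsum : t j0 + ∑ j ∈ Finset.univ.erase j0, t j = 0 := by
    rw [Finset.add_sum_erase _ _ (Finset.mem_univ j0)]
    rw [← hevalF]; exact hx
  have : ‖t j0‖ = ‖∑ j ∈ Finset.univ.erase j0, t j‖ := by
    have h' : t j0 = -∑ j ∈ Finset.univ.erase j0, t j := eq_neg_of_add_eq_zero_left hsum
    rw [h', norm_neg]
  rw [this] at hrest
  exact lt_irrefl _ hrest
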